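/- Let M ∈ M_{m,n}(r,c) be a (q,k,t)-design matrix with q ≥ 2 and t ≥ 1 that is scalable. Then rank(M) ≥ nc − nc/(1+X), where X = mrq/(cnt(q−1)). -/

import Mathlib

open Matrix BigOperators
open scoped ComplexOrder

noncomputable section

/-- The underlying `(r*m) x (c*n)` scalar matrix of a block matrix. -/
def flattenBlocks {m n r c : ℕ} (A : Fin m → Fin n → Matrix (Fin r) (Fin c) ℂ) :
    Matrix (Fin m × Fin r) (Fin n × Fin c) ℂ :=
  fun p q => A p.1 q.1 p.2 q.2

/-- The rank of a block matrix: the rank of the underlying scalar matrix. -/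
def blockRank {m n r c : ℕ} (A : Fin m → Fin n → Matrix (Fin r) (Fin c) ℂ) : ℕ :=
  (flattenBlocks A).rank

/-- A (multi)set of `s` complex `r x c` matrices, given as an indexed family, is well-spread
if for every subspace `V` of `ℂ^c` the sum of the dimensions of the images `A_i(V)` is at
least `(r*s/c) * dim V`. -/
def WellSpread {r c s : ℕ} (B : Fin s → Matrix (Fin r) (Fin c) ℂ) : Prop :=
  ∀ V : Submodule ℂ (Fin c → ℂ),
    ((r : ℝ) * s / c) * (Module.finrank ℂ V) ≤
      ∑ i, ((Module.finrank ℂ (V.map (B i).mulVecLin) : ℝ))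

/-- `A` is a `(q,k,t)`-design matrix: each row has at most `q` nonzero blocks, each column
contains `k` blocks (in distinct rows) forming a well-spread set, and the supports of any two
distinct columns intersect in at most `t` rows. -/
def IsDesign {m n r c : ℕ} (q k t : ℕ)
    (A : Fin m → Fin n → Matrix (Fin r) (Fin c) ℂ) : Prop :=
  (∀ i : Fin m, ({j : Fin n | A i j ≠ 0}).ncard ≤ q) ∧
  (∀ j : Fin n, ∃ f : Fin k → Fin m, Function.Injective f ∧
      WellSpread (fun l => A (f l) j)) ∧
  (∀ j j' : Fin n, j ≠ j' → ({i : Fin m | A i j ≠ 0 ∧ A i j' ≠ 0}).ncard ≤ t)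

/-- The capacity of a block matrix `A ∈ M_{m,n}(r,c)`. -/
def cap {m n r c : ℕ} (A : Fin m → Fin n → Matrix (Fin r) (Fin c) ℂ) : ℝ :=
  sInf { z : ℝ | ∃ X : Fin m → Matrix (Fin r) (Fin r) ℂ,
    (∀ i, (X i).PosDef) ∧ (∏ i, (X i).det) = 1 ∧
    z = ∏ j, ((((n : ℂ) * c / ((m : ℂ) * r)) • ∑ i, (A i j)ᴴ * X i * A i j).det).re }

/-- The `i`-th row sum `R_i(A) = Σ_j A_{ij} A_{ij}*`. -/
def RowSum {m n r c : ℕ} (A : Fin m → Fin n → Matrix (Fin r) (Fin c) ℂ) (i : Fin m) :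
    Matrix (Fin r) (Fin r) ℂ := ∑ j, A i j * (A i j)ᴴ

/-- The `j`-th column sum `C_j(A) = (nc/mr) Σ_i A_{ij}* A_{ij}`. -/
def ColSum {m n r c : ℕ} (A : Fin m → Fin n → Matrix (Fin r) (Fin c) ℂ) (j : Fin n) :
    Matrix (Fin c) (Fin c) ℂ := ((n : ℂ) * c / ((m : ℂ) * r)) • ∑ i, (A i j)ᴴ * A i j

/-- `‖M‖₂² = tr (M M*)` for a square complex matrix. -/
def sqNorm {k : ℕ} (M : Matrix (Fin k) (Fin k) ℂ) : ℝ := ((M * Mᴴ).trace).re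

/-- Distance of `A` to being doubly stochastic. -/
def dsDist {m n r c : ℕ} (A : Fin m → Fin n → Matrix (Fin r) (Fin c) ℂ) : ℝ :=
  ∑ j, sqNorm (ColSum A j - 1) + ∑ i, sqNorm (RowSum A i - 1)

/-- `B` is a scaling of `A`: `B_{ij} = R_i A_{ij} C_j` with nonsingular coefficients. -/
def IsScaling {m n r c : ℕ} (A B : Fin m → Fin n → Matrix (Fin r) (Fin c) ℂ) : Prop :=
  ∃ (R : Fin m → Matrix (Fin r) (Fin r) ℂ) (C : Fin n → Matrix (Fin c) (Fin c) ℂ),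
    (∀ i, (R i).det ≠ 0) ∧ (∀ j, (C j).det ≠ 0) ∧
    ∀ i j, B i j = R i * A i j * C j

/-- `A` is scalable if it has scalings arbitrarily close to doubly stochastic. -/
def Scalable {m n r c : ℕ} (A : Fin m → Fin n → Matrix (Fin r) (Fin c) ℂ) : Prop :=
  ∀ ε : ℝ, 0 < ε → ∃ B, IsScaling A B ∧ dsDist B ≤ ε


-- ========== auxiliary lemmas ==========
attribute [local instance] Matrix.frobeniusSeminormedAddCommGroup Matrix.frobeniusNormedSpace

lemma frob_sq {a b : Type*} [Fintype a] [Fintype b] (A : Matrix a b ℂ) :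
    ‖A‖^2 = ∑ i, ∑ j, ‖A i j‖^2 := by
  rw [Matrix.frobenius_norm_def, ← Real.rpow_natCast _ 2, ← Real.rpow_mul (by positivity)]
  norm_num

lemma trace_self_norm {a b : Type*} [Fintype a] [Fintype b] (X : Matrix a b ℂ) :
    ((X * Xᴴ).trace).re = ‖X‖^2 := by
  rw [frob_sq, Matrix.trace, Complex.re_sum]
  congr 1; ext i
  rw [Matrix.diag_apply, Matrix.mul_apply, Complex.re_sum]
  congr 1; ext j
  simp [Matrix.conjTranspose_apply, Complex.star_def, Complex.mul_conj,
    Complex.normSq_eq_norm_sq]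
  rw [← Complex.ofReal_pow, Complex.ofReal_re]

lemma re_trace_sq_le {d : ℕ} (X : Matrix (Fin d) (Fin d) ℂ) :
    (X.trace.re)^2 ≤ d * ‖X‖^2 := by
  rw [Matrix.trace, Complex.re_sum, frob_sq]
  calc (∑ i, (X i i).re)^2 ≤ (Finset.univ : Finset (Fin d)).card * ∑ i, (X i i).re^2 :=
        sq_sum_le_card_mul_sum_sq
    _ ≤ d * ∑ i, ∑ j, ‖X i j‖^2 := by
        rw [Finset.card_univ, Fintype.card_fin]
        gcongr with i _
        calc (X i i).re^2 ≤ ‖X i i‖^2 := by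
              have := Complex.abs_re_le_norm (X i i)
              have h2 : |(X i i).re|^2 = (X i i).re^2 := sq_abs _
              nlinarith [norm_nonneg (X i i), abs_nonneg ((X i i).re)]
          _ ≤ ∑ j, ‖X i j‖^2 := Finset.single_le_sum (f := fun j => ‖X i j‖^2)
              (fun j _ => by positivity) (Finset.mem_univ i)

lemma sqNorm_eq {k : ℕ} (M : Matrix (Fin k) (Fin k) ℂ) : sqNorm M = ‖M‖^2 :=
  trace_self_norm M

lemma helper_CS {ι : Type*} [Fintype ι] (s : Finset ι) (x : ι → ℝ)
    (h0 : ∀ i, i ∉ s → x i = 0) (q : ℕ) (hs : s.card ≤ q) :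
    (∑ i, x i)^2 ≤ q * ∑ i, x i^2 := by
  have h1 : ∑ i, x i = ∑ i ∈ s, x i :=
    (Finset.sum_subset (Finset.subset_univ s) (fun i _ hi => h0 i hi)).symm
  rw [h1]
  calc (∑ i ∈ s, x i)^2 ≤ s.card * ∑ i ∈ s, x i^2 := sq_sum_le_card_mul_sum_sq
    _ ≤ q * ∑ i, x i^2 := by
        apply mul_le_mul (by exact_mod_cast hs)
          (Finset.sum_le_sum_of_subset_of_nonneg (Finset.subset_univ s)
            (fun i _ _ => sq_nonneg (x i)))
          (Finset.sum_nonneg (fun i _ => sq_nonneg (x i))) (by positivity)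

lemma le_of_sq_le {a b : ℝ} (ha : 0 ≤ a) (hb : 0 ≤ b) (h : a^2 ≤ b^2) : a ≤ b := by
  nlinarith

lemma neg_le_of_sq_le {a b : ℝ} (hb : 0 ≤ b) (h : a^2 ≤ b^2) : -b ≤ a := by
  nlinarith

lemma cross_norm {r c : ℕ} (X Y : Matrix (Fin r) (Fin c) ℂ) :
    ‖Xᴴ * Y‖^2 = (((X * Xᴴ) * (Y * Yᴴ)).trace).re := by
  rw [← trace_self_norm]
  congr 1
  have h1 : (Xᴴ * Y) * (Xᴴ * Y)ᴴ = Xᴴ * (Y * Yᴴ) * X := by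
    rw [Matrix.conjTranspose_mul, Matrix.conjTranspose_conjTranspose]
    rw [← Matrix.mul_assoc, ← Matrix.mul_assoc]
  rw [h1, Matrix.trace_mul_cycle]

lemma norm_one_matrix (d : ℕ) : ‖(1 : Matrix (Fin d) (Fin d) ℂ)‖ = Real.sqrt d := by
  have h1 : ‖(1 : Matrix (Fin d) (Fin d) ℂ)‖^2 = (d : ℝ) := by
    rw [frob_sq]
    simp [Matrix.one_apply, apply_ite (norm : ℂ → ℝ)]
  rw [← h1, Real.sqrt_sq (norm_nonneg _)]

lemma herm_key {γ : Type*} [Fintype γ] [DecidableEq γ] (A : Matrix γ γ ℂ)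
    (hA : A.IsHermitian) :
    (A.trace.re)^2 ≤ (A.rank : ℝ) * ((A * A).trace.re) := by
  classical
  set V : Matrix γ γ ℂ := (hA.eigenvectorUnitary : Matrix γ γ ℂ) with hV
  have hVU : star V * V = 1 := Matrix.mem_unitaryGroup_iff'.mp hA.eigenvectorUnitary.2
  set g := hA.eigenvalues with hg
  set D : Matrix γ γ ℂ := Matrix.diagonal (fun i => (g i : ℂ)) with hD
  have hspec : A = V * D * star V := by
    have := hA.spectral_theorem
    exact this
  have h1 : A.trace = ∑ i, (g i : ℂ) := by
    rw [hspec, Matrix.trace_mul_cycle, hVU, one_mul, Matrix.trace_diagonal]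
  have h2 : (A * A).trace = ∑ i, (g i : ℂ)^2 := by
    have : A * A = V * (D * D) * star V := by
      rw [hspec]
      calc V * D * star V * (V * D * star V)
          = V * (D * ((star V * V) * (D * star V))) := by simp only [mul_assoc]
        _ = V * (D * (D * star V)) := by rw [hVU, one_mul]
        _ = V * (D * D) * star V := by simp only [mul_assoc]
    rw [this, Matrix.trace_mul_cycle, hVU, one_mul, hD,
      Matrix.diagonal_mul_diagonal, Matrix.trace_diagonal]
    congr 1; ext i; ring
  have hre1 : A.trace.re = ∑ i, g i := by rw [h1, Complex.re_sum]; simp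
  have hre2 : ((A * A).trace).re = ∑ i, (g i)^2 := by
    rw [h2, Complex.re_sum]
    congr 1; ext i
    rw [← Complex.ofReal_pow, Complex.ofReal_re]
  rw [hre1, hre2, hA.rank_eq_card_non_zero_eigs]
  set s : Finset γ := Finset.univ.filter (fun i => g i ≠ 0) with hs
  have hcard : Fintype.card {i // hA.eigenvalues i ≠ 0} = s.card := by
    rw [hs]; simp [Fintype.card_subtype, hg]
  rw [hcard]
  have hsum : ∑ i, g i = ∑ i ∈ s, g i := by
    rw [hs, Finset.sum_filter_ne_zero]
  rw [hsum]
  calc (∑ i ∈ s, g i)^2 ≤ s.card * ∑ i ∈ s, (g i)^2 := sq_sum_le_card_mul_sum_sq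
    _ ≤ s.card * ∑ i, (g i)^2 := by
        exact mul_le_mul_of_nonneg_left
          (Finset.sum_le_sum_of_subset_of_nonneg (Finset.subset_univ s)
            (fun i _ _ => sq_nonneg (g i))) (Nat.cast_nonneg _)

lemma flatten_scaling {m n r c : ℕ} (M B : Fin m → Fin n → Matrix (Fin r) (Fin c) ℂ)
    (R : Fin m → Matrix (Fin r) (Fin r) ℂ) (C : Fin n → Matrix (Fin c) (Fin c) ℂ)
    (hB : ∀ i j, B i j = R i * M i j * C j) :
    (flattenBlocks B).rank ≤ (flattenBlocks M).rank := by
  classical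
  set Rbig : Matrix (Fin m × Fin r) (Fin m × Fin r) ℂ :=
    fun p p' => if p.1 = p'.1 then R p.1 p.2 p'.2 else 0 with hR
  set Cbig : Matrix (Fin n × Fin c) (Fin n × Fin c) ℂ :=
    fun s s' => if s.1 = s'.1 then C s.1 s.2 s'.2 else 0 with hC
  have key : flattenBlocks B = Rbig * (flattenBlocks M * Cbig) := by
    ext ⟨i, a⟩ ⟨j, b⟩
    simp only [Matrix.mul_apply]
    simp only [flattenBlocks, hR, hC, Matrix.mul_apply, Fintype.sum_prod_type, ite_mul, zero_mul,
      mul_ite, mul_zero, Finset.sum_ite_irrel, Finset.sum_const_zero,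
      Finset.sum_ite_eq, Finset.sum_ite_eq', Finset.mem_univ, if_true, hB,
      Finset.mul_sum, Finset.sum_mul]
    rw [Finset.sum_comm]
    apply Finset.sum_congr rfl; intro a' _
    apply Finset.sum_congr rfl; intro b' _
    ring
  have h1 : (Rbig * (flattenBlocks M * Cbig)).rank ≤ (flattenBlocks M * Cbig).rank :=
    Matrix.rank_mul_le_right _ _
  have h2 : (flattenBlocks M * Cbig).rank ≤ (flattenBlocks M).rank :=
    Matrix.rank_mul_le_left _ _
  rw [key]
  exact le_trans h1 h2

lemma scaling_bound {m n r c q t : ℕ} (hm : 0 < m) (hn : 0 < n) (hr : 0 < r) (hc : 0 < c)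
    (hq1 : 1 ≤ q)
    (M B : Fin m → Fin n → Matrix (Fin r) (Fin c) ℂ)
    (hrow : ∀ i : Fin m, ({j : Fin n | M i j ≠ 0}).ncard ≤ q)
    (hcolt : ∀ j j' : Fin n, j ≠ j' → ({i : Fin m | M i j ≠ 0 ∧ M i j' ≠ 0}).ncard ≤ t)
    (hBM : ∀ i j, M i j = 0 → B i j = 0)
    (δ : ℝ) (hδ0 : 0 ≤ δ) (hδ1 : δ ≤ 1) (hds : dsDist B ≤ δ^2)
    (K : ℕ) (hK : ((flattenBlocks B)ᴴ * flattenBlocks B).rank ≤ K) :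
    ((m:ℝ)*r - m*(Real.sqrt r)*δ)^2 ≤
      (K:ℝ) * ((n:ℝ)*(((m:ℝ)*r)/((n:ℝ)*c))^2*(Real.sqrt c+δ)^2
        + (t:ℝ)*m*((Real.sqrt r+δ)^2 - ((r:ℝ)-(Real.sqrt r)*δ)^2/((q:ℝ)*r))) := by
  classical
  set F := flattenBlocks B with hF
  set N := Fᴴ * F with hN
  have hherm : N.IsHermitian := Matrix.isHermitian_conjTranspose_mul_self F
  have hr0 : (0:ℝ) ≤ r := by positivity
  have hsqr1 : (1:ℝ) ≤ Real.sqrt r := by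
    rw [show (1:ℝ) = Real.sqrt 1 by simp]
    exact Real.sqrt_le_sqrt (by exact_mod_cast hr)
  have hsqrr : Real.sqrt r * Real.sqrt r = r := Real.mul_self_sqrt hr0
  have hLnn : 0 ≤ (r:ℝ) - Real.sqrt r * δ := by nlinarith
  -- distance facts
  have hsq_nonneg_col : ∀ j, 0 ≤ sqNorm (ColSum B j - 1) := by
    intro j; rw [sqNorm_eq]; positivity
  have hsq_nonneg_row : ∀ i, 0 ≤ sqNorm (RowSum B i - 1) := by
    intro i; rw [sqNorm_eq]; positivity
  have hrow_norm : ∀ i, ‖RowSum B i - 1‖ ≤ δ := by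
    intro i
    have h1 : sqNorm (RowSum B i - 1) ≤ δ^2 := by
      have h2 : sqNorm (RowSum B i - 1) ≤ ∑ i', sqNorm (RowSum B i' - 1) :=
        Finset.single_le_sum (fun i' _ => hsq_nonneg_row i') (Finset.mem_univ i)
      have h3 : (0:ℝ) ≤ ∑ j, sqNorm (ColSum B j - 1) :=
        Finset.sum_nonneg (fun j _ => hsq_nonneg_col j)
      unfold dsDist at hds
      linarith
    rw [sqNorm_eq] at h1
    exact le_of_sq_le (norm_nonneg _) hδ0 h1
  have hcol_norm : ∀ j, ‖ColSum B j - 1‖ ≤ δ := by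
    intro j
    have h1 : sqNorm (ColSum B j - 1) ≤ δ^2 := by
      have h2 : sqNorm (ColSum B j - 1) ≤ ∑ j', sqNorm (ColSum B j' - 1) :=
        Finset.single_le_sum (fun j' _ => hsq_nonneg_col j') (Finset.mem_univ j)
      have h3 : (0:ℝ) ≤ ∑ i, sqNorm (RowSum B i - 1) :=
        Finset.sum_nonneg (fun i _ => hsq_nonneg_row i)
      unfold dsDist at hds
      linarith
    rw [sqNorm_eq] at h1
    exact le_of_sq_le (norm_nonneg _) hδ0 h1
  -- traces of row sums
  have hSdec : ∀ i, RowSum B i = 1 + (RowSum B i - 1) := by intro i; abel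
  have htrS : ∀ i, ((RowSum B i).trace).re = r + (((RowSum B i - 1)).trace).re := by
    intro i
    conv_lhs => rw [hSdec i]
    rw [Matrix.trace_add, Complex.add_re, Matrix.trace_one]
    simp
  have htrS_low : ∀ i, (r:ℝ) - Real.sqrt r * δ ≤ ((RowSum B i).trace).re := by
    intro i
    have h2 : -(Real.sqrt r * δ) ≤ (((RowSum B i - 1)).trace).re := by
      apply neg_le_of_sq_le (by positivity)
      have h3 := re_trace_sq_le (RowSum B i - 1)
      have h4 : ‖RowSum B i - 1‖^2 ≤ δ^2 := by
        nlinarith [hrow_norm i, norm_nonneg (RowSum B i - 1)]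
      have h5 : (Real.sqrt r * δ)^2 = r * δ^2 := by
        rw [mul_pow]; rw [Real.sq_sqrt hr0]
      nlinarith
    have := htrS i
    linarith
  have hSnorm : ∀ i, ‖RowSum B i‖ ≤ Real.sqrt r + δ := by
    intro i
    calc ‖RowSum B i‖ = ‖(1 : Matrix (Fin r) (Fin r) ℂ) + (RowSum B i - 1)‖ := by
          rw [← hSdec i]
      _ ≤ ‖(1 : Matrix (Fin r) (Fin r) ℂ)‖ + ‖RowSum B i - 1‖ := norm_add_le _ _
      _ ≤ Real.sqrt r + δ := by
          rw [norm_one_matrix]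
          exact add_le_add_right (hrow_norm i) _
  -- P blocks
  set P : Fin m → Fin n → Matrix (Fin r) (Fin r) ℂ := fun i j => B i j * (B i j)ᴴ with hP
  have hPherm : ∀ i j, (P i j)ᴴ = P i j := by
    intro i j
    simp [hP, Matrix.conjTranspose_mul]
  have hSP : ∀ i, RowSum B i = ∑ j, P i j := fun i => rfl
  have htrP : ∀ i j, ((P i j).trace).re = ‖B i j‖^2 := fun i j => trace_self_norm _
  have hPnorm : ∀ i j, ((P i j * P i j).trace).re = ‖P i j‖^2 := by
    intro i j
    conv_lhs => rw [show P i j * P i j = P i j * (P i j)ᴴ by rw [hPherm]]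
    exact trace_self_norm _
  -- T1
  have hinner : ∀ i, ∑ a, ∑ y : Fin n × Fin c, ‖F (i,a) y‖^2 = ∑ j, ((P i j).trace).re := by
    intro i
    calc ∑ a, ∑ y : Fin n × Fin c, ‖F (i,a) y‖^2
        = ∑ a, ∑ j, ∑ b, ‖B i j a b‖^2 := by
          apply Finset.sum_congr rfl; intro a _
          rw [Fintype.sum_prod_type]; rfl
      _ = ∑ j, ∑ a, ∑ b, ‖B i j a b‖^2 := Finset.sum_comm
      _ = ∑ j, ((P i j).trace).re := by
          apply Finset.sum_congr rfl; intro j _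
          rw [htrP i j, frob_sq]
  have hT1 : (N.trace).re = ∑ i, ((RowSum B i).trace).re := by
    rw [hN, Matrix.trace_mul_comm, trace_self_norm, frob_sq]
    rw [Fintype.sum_prod_type]
    apply Finset.sum_congr rfl; intro i _
    exact (hinner i).trans (by rw [hSP i, Matrix.trace_sum, Complex.re_sum])
  have hT1low : (m:ℝ)*((r:ℝ) - Real.sqrt r * δ) ≤ (N.trace).re := by
    rw [hT1]
    calc (m:ℝ)*((r:ℝ) - Real.sqrt r * δ)
        = ∑ _i : Fin m, ((r:ℝ) - Real.sqrt r * δ) := by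
          rw [Finset.sum_const, Finset.card_univ, Fintype.card_fin, nsmul_eq_mul]
      _ ≤ ∑ i, ((RowSum B i).trace).re := Finset.sum_le_sum (fun i _ => htrS_low i)
  -- block entries of N
  set G : Fin n → Fin n → Matrix (Fin c) (Fin c) ℂ := fun j j' => ∑ i, (B i j)ᴴ * B i j' with hG
  have hNentry : ∀ (p q : Fin n × Fin c), N p q = G p.1 q.1 p.2 q.2 := by
    intro p q
    rw [hN, Matrix.mul_apply, Fintype.sum_prod_type]
    simp only [hG, Matrix.sum_apply, Matrix.mul_apply, Matrix.conjTranspose_apply, hF,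
      flattenBlocks]
  have hT2eq : ((N*N).trace).re = ∑ j, ∑ j', ‖G j j'‖^2 := by
    have h1 : N * N = N * Nᴴ := by rw [hherm.eq]
    rw [h1, trace_self_norm, frob_sq, Fintype.sum_prod_type]
    apply Finset.sum_congr rfl; intro j _
    calc ∑ b, ∑ y : Fin n × Fin c, ‖N (j, b) y‖^2
        = ∑ b, ∑ j', ∑ b', ‖G j j' b b'‖^2 := by
          apply Finset.sum_congr rfl; intro b _
          rw [Fintype.sum_prod_type]
          apply Finset.sum_congr rfl; intro j' _
          apply Finset.sum_congr rfl; intro b' _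
          rw [hNentry (j, b) (j', b')]
      _ = ∑ j', ∑ b, ∑ b', ‖G j j' b b'‖^2 := Finset.sum_comm
      _ = ∑ j', ‖G j j'‖^2 := by
          apply Finset.sum_congr rfl; intro j' _
          rw [frob_sq]
  -- diagonal bound
  have hz : ‖((n : ℂ) * c / ((m : ℂ) * r))‖ = ((n:ℝ)*c)/((m:ℝ)*r) := by
    rw [norm_div, norm_mul, norm_mul]
    simp [Complex.norm_natCast]
  have hColG : ∀ j, ColSum B j = ((n : ℂ) * c / ((m : ℂ) * r)) • G j j := fun j => rfl
  have hGdiag : ∀ j, ‖G j j‖ ≤ ((m:ℝ)*r)/((n:ℝ)*c) * (Real.sqrt c + δ) := by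
    intro j
    have h1 : ‖ColSum B j‖ = ((n:ℝ)*c)/((m:ℝ)*r) * ‖G j j‖ := by
      rw [hColG j, norm_smul, hz]
    have h2 : ‖ColSum B j‖ ≤ Real.sqrt c + δ := by
      have e0 : (1 : Matrix (Fin c) (Fin c) ℂ) + (ColSum B j - 1) = ColSum B j := by abel
      calc ‖ColSum B j‖ = ‖(1 : Matrix (Fin c) (Fin c) ℂ) + (ColSum B j - 1)‖ := by rw [e0]
        _ ≤ ‖(1 : Matrix (Fin c) (Fin c) ℂ)‖ + ‖ColSum B j - 1‖ := norm_add_le _ _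
        _ ≤ Real.sqrt c + δ := by
            rw [norm_one_matrix]
            exact add_le_add_right (hcol_norm j) _
    have h3 : ‖G j j‖ = ((m:ℝ)*r)/((n:ℝ)*c) * ‖ColSum B j‖ := by
      rw [h1]
      have hm0 : ((m:ℝ)) ≠ 0 := by positivity
      have hr0' : ((r:ℝ)) ≠ 0 := by positivity
      have hn0 : ((n:ℝ)) ≠ 0 := by positivity
      have hc0 : ((c:ℝ)) ≠ 0 := by positivity
      field_simp
    rw [h3]
    exact mul_le_mul_of_nonneg_left h2 (by positivity)
  have hdiag_sum : ∑ j, ‖G j j‖^2 ≤ (n:ℝ) * (((m:ℝ)*r)/((n:ℝ)*c))^2 * (Real.sqrt c + δ)^2 := by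
    calc ∑ j, ‖G j j‖^2
        ≤ ∑ _j : Fin n, (((m:ℝ)*r)/((n:ℝ)*c) * (Real.sqrt c + δ))^2 :=
          Finset.sum_le_sum (fun j _ => pow_le_pow_left₀ (norm_nonneg _) (hGdiag j) 2)
      _ = (n:ℝ) * (((m:ℝ)*r)/((n:ℝ)*c))^2 * (Real.sqrt c + δ)^2 := by
          rw [Finset.sum_const, Finset.card_univ, Fintype.card_fin, nsmul_eq_mul]
          ring
  -- off-diagonal bound
  have hoff_pair : ∀ j j', j ≠ j' → ‖G j j'‖^2 ≤ (t:ℝ) * ∑ i, ((P i j * P i j').trace).re := by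
    intro j j' hjj
    have hx0 : ∀ i, i ∉ Finset.univ.filter (fun i => M i j ≠ 0 ∧ M i j' ≠ 0) →
        ‖(B i j)ᴴ * B i j'‖ = 0 := by
      intro i hi
      simp only [Finset.mem_filter, Finset.mem_univ, true_and, not_and_or, not_not] at hi
      rcases hi with h | h
      · rw [hBM i j h]; simp
      · rw [hBM i j' h]; simp
    have hcard : (Finset.univ.filter (fun i => M i j ≠ 0 ∧ M i j' ≠ 0)).card ≤ t := by
      have h5 := hcolt j j' hjj
      have h6 : ((Finset.univ.filter (fun i => M i j ≠ 0 ∧ M i j' ≠ 0)) : Set (Fin m)).ncard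
          = ({i : Fin m | M i j ≠ 0 ∧ M i j' ≠ 0}).ncard := by
        congr 1
        ext i; simp
      rw [← Set.ncard_coe_finset]
      rw [h6]
      exact h5
    have h1 : ‖G j j'‖ ≤ ∑ i, ‖(B i j)ᴴ * B i j'‖ := norm_sum_le _ _
    have h2 := helper_CS _ (fun i => ‖(B i j)ᴴ * B i j'‖) hx0 t hcard
    calc ‖G j j'‖^2 ≤ (∑ i, ‖(B i j)ᴴ * B i j'‖)^2 :=
          pow_le_pow_left₀ (norm_nonneg _) h1 2
      _ ≤ (t:ℝ) * ∑ i, ‖(B i j)ᴴ * B i j'‖^2 := h2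
      _ = (t:ℝ) * ∑ i, ((P i j * P i j').trace).re := by
          congr 1
          apply Finset.sum_congr rfl; intro i _
          exact cross_norm (B i j) (B i j')
  have hrow_off : ∀ i, ∑ j, ∑ j' ∈ Finset.univ.erase j, ((P i j * P i j').trace).re
      ≤ (Real.sqrt r + δ)^2 - ((r:ℝ) - Real.sqrt r * δ)^2 / ((q:ℝ)*r) := by
    intro i
    have hfull : ∑ j, ∑ j', ((P i j * P i j').trace).re = ‖RowSum B i‖^2 := by
      have hSH : (RowSum B i)ᴴ = RowSum B i := by
        rw [hSP i, Matrix.conjTranspose_sum]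
        apply Finset.sum_congr rfl; intro j _
        exact hPherm i j
      have e1 : RowSum B i * (RowSum B i)ᴴ = ∑ j, ∑ j', P i j * P i j' := by
        rw [hSH]
        conv_lhs => rw [hSP i]
        rw [Finset.sum_mul_sum]
      rw [← trace_self_norm (RowSum B i), e1, Matrix.trace_sum, Complex.re_sum]
      apply Finset.sum_congr rfl; intro j _
      rw [Matrix.trace_sum, Complex.re_sum]
    have hPdiag_low : ((r:ℝ) - Real.sqrt r * δ)^2 / ((q:ℝ)*r) ≤ ∑ j, ((P i j * P i j).trace).re := by
      have e2 : ∑ j, ((P i j * P i j).trace).re = ∑ j, ‖P i j‖^2 :=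
        Finset.sum_congr rfl (fun j _ => hPnorm i j)
      have hqr : (0:ℝ) < (q:ℝ)*r := by positivity
      rw [e2, div_le_iff₀ hqr]
      have hx0' : ∀ j, j ∉ Finset.univ.filter (fun j => M i j ≠ 0) →
          ((P i j).trace).re = 0 := by
        intro j hj
        simp only [Finset.mem_filter, Finset.mem_univ, true_and, not_not] at hj
        rw [htrP i j, hBM i j hj]
        simp
      have hcard' : (Finset.univ.filter (fun j => M i j ≠ 0)).card ≤ q := by
        have h5 := hrow i
        have h6 : ((Finset.univ.filter (fun j => M i j ≠ 0)) : Set (Fin n)).ncard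
            = ({j : Fin n | M i j ≠ 0}).ncard := by
          congr 1; ext j; simp
        rw [← Set.ncard_coe_finset, h6]
        exact h5
      calc ((r:ℝ) - Real.sqrt r * δ)^2
          ≤ (((RowSum B i).trace).re)^2 := pow_le_pow_left₀ hLnn (htrS_low i) 2
        _ = (∑ j, ((P i j).trace).re)^2 := by rw [hSP i, Matrix.trace_sum, Complex.re_sum]
        _ ≤ (q:ℝ) * ∑ j, (((P i j).trace).re)^2 :=
            helper_CS _ _ hx0' q hcard'
        _ ≤ (q:ℝ) * ∑ j, ((r:ℝ) * ‖P i j‖^2) := by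
            apply mul_le_mul_of_nonneg_left
              (Finset.sum_le_sum (fun j _ => re_trace_sq_le (P i j))) (by positivity)
        _ = (∑ j, ‖P i j‖^2) * ((q:ℝ)*r) := by
            rw [← Finset.mul_sum]
            ring
    have hS2 : ‖RowSum B i‖^2 ≤ (Real.sqrt r + δ)^2 :=
      pow_le_pow_left₀ (norm_nonneg _) (hSnorm i) 2
    have hsplit : ∑ j, ∑ j' ∈ Finset.univ.erase j, ((P i j * P i j').trace).re
        = ∑ j, (∑ j', ((P i j * P i j').trace).re) - ∑ j, ((P i j * P i j).trace).re := by
      rw [← Finset.sum_sub_distrib]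
      apply Finset.sum_congr rfl; intro j _
      have := Finset.add_sum_erase Finset.univ (fun j' => ((P i j * P i j').trace).re)
        (Finset.mem_univ j)
      linarith
    rw [hsplit, hfull]
    linarith
  have hoff_total : ∑ j, ∑ j' ∈ Finset.univ.erase j, ‖G j j'‖^2 ≤
      (t:ℝ) * (m:ℝ) * ((Real.sqrt r + δ)^2 - ((r:ℝ) - Real.sqrt r * δ)^2/((q:ℝ)*r)) := by
    calc ∑ j, ∑ j' ∈ Finset.univ.erase j, ‖G j j'‖^2
        ≤ ∑ j, ∑ j' ∈ Finset.univ.erase j, ((t:ℝ) * ∑ i, ((P i j * P i j').trace).re) := by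
          apply Finset.sum_le_sum; intro j _
          apply Finset.sum_le_sum; intro j' hj'
          exact hoff_pair j j' (Ne.symm (Finset.mem_erase.mp hj').1)
      _ = (t:ℝ) * ∑ i, ∑ j, ∑ j' ∈ Finset.univ.erase j, ((P i j * P i j').trace).re := by
          simp only [← Finset.mul_sum]
          congr 1
          rw [show (∑ j, ∑ j' ∈ Finset.univ.erase j, ∑ i, ((P i j * P i j').trace).re)
              = ∑ j, ∑ i, ∑ j' ∈ Finset.univ.erase j, ((P i j * P i j').trace).re from
            Finset.sum_congr rfl (fun j _ => Finset.sum_comm)]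
          exact Finset.sum_comm
      _ ≤ (t:ℝ) * ∑ _i : Fin m, ((Real.sqrt r + δ)^2 - ((r:ℝ) - Real.sqrt r * δ)^2/((q:ℝ)*r)) := by
          apply mul_le_mul_of_nonneg_left
            (Finset.sum_le_sum (fun i _ => hrow_off i)) (by positivity)
      _ = (t:ℝ) * (m:ℝ) * ((Real.sqrt r + δ)^2 - ((r:ℝ) - Real.sqrt r * δ)^2/((q:ℝ)*r)) := by
          rw [Finset.sum_const, Finset.card_univ, Fintype.card_fin, nsmul_eq_mul]
          ring
  -- final assembly
  have hT2 : ((N*N).trace).re ≤ (n:ℝ)*(((m:ℝ)*r)/((n:ℝ)*c))^2*(Real.sqrt c+δ)^2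
      + (t:ℝ)*(m:ℝ)*((Real.sqrt r+δ)^2 - ((r:ℝ)-(Real.sqrt r)*δ)^2/((q:ℝ)*r)) := by
    rw [hT2eq]
    have hsplit2 : ∑ j, ∑ j', ‖G j j'‖^2
        = ∑ j, ‖G j j‖^2 + ∑ j, ∑ j' ∈ Finset.univ.erase j, ‖G j j'‖^2 := by
      rw [← Finset.sum_add_distrib]
      apply Finset.sum_congr rfl; intro j _
      exact (Finset.add_sum_erase Finset.univ (fun j' => ‖G j j'‖^2) (Finset.mem_univ j)).symm
    rw [hsplit2]
    linarith
  have hrank := herm_key N hherm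
  have hT2nonneg : 0 ≤ ((N*N).trace).re := by
    rw [hT2eq]
    positivity
  have hLeq : (m:ℝ)*r - (m:ℝ)*(Real.sqrt r)*δ = (m:ℝ)*((r:ℝ) - Real.sqrt r * δ) := by ring
  have hT1sq : ((m:ℝ)*r - (m:ℝ)*(Real.sqrt r)*δ)^2 ≤ ((N.trace).re)^2 := by
    rw [hLeq]
    exact pow_le_pow_left₀ (by positivity) hT1low 2
  have hKr : ((N.rank : ℝ)) ≤ (K:ℝ) := by exact_mod_cast hK
  have hK0 : (0:ℝ) ≤ (K:ℝ) := Nat.cast_nonneg K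
  have hfinal := mul_le_mul_of_nonneg_left hT2 hK0
  calc ((m:ℝ)*r - (m:ℝ)*(Real.sqrt r)*δ)^2
      ≤ ((N.trace).re)^2 := hT1sq
    _ ≤ ((N.rank:ℝ)) * ((N*N).trace).re := hrank
    _ ≤ (K:ℝ) * ((N*N).trace).re := mul_le_mul_of_nonneg_right hKr hT2nonneg
    _ ≤ (K:ℝ) * ((n:ℝ)*(((m:ℝ)*r)/((n:ℝ)*c))^2*(Real.sqrt c+δ)^2
        + (t:ℝ)*(m:ℝ)*((Real.sqrt r+δ)^2 - ((r:ℝ)-(Real.sqrt r)*δ)^2/((q:ℝ)*r))) := hfinal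


/-- Lemma 3.8: rank bound for scalable design matrices. -/
theorem rank_scalable_design {m n r c q k t : ℕ}
    (hm : 0 < m) (hn : 0 < n) (hr : 0 < r) (hc : 0 < c)
    (hq : 2 ≤ q) (ht : 1 ≤ t)
    (M : Fin m → Fin n → Matrix (Fin r) (Fin c) ℂ)
    (hM : IsDesign q k t M) (hscal : Scalable M) :
    (n : ℝ) * c - (n : ℝ) * c /
        (1 + (m : ℝ) * r * q / ((c : ℝ) * n * t * ((q : ℝ) - 1)))
      ≤ (blockRank M : ℝ) := by
  classical
  obtain ⟨hrowq, -, hcolt⟩ := hM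
  set K := blockRank M with hKdef
  have hseq : ∀ δ : ℝ, 0 < δ → δ ≤ 1 →
      ((m:ℝ)*r - m*(Real.sqrt r)*δ)^2 ≤
      (K:ℝ) * ((n:ℝ)*(((m:ℝ)*r)/((n:ℝ)*c))^2*(Real.sqrt c+δ)^2
        + (t:ℝ)*(m:ℝ)*((Real.sqrt r+δ)^2 - ((r:ℝ)-(Real.sqrt r)*δ)^2/((q:ℝ)*r))) := by
    intro δ hδ0 hδ1
    obtain ⟨B, hscB, hds⟩ := hscal (δ^2) (by positivity)
    obtain ⟨R, C, hRdet, hCdet, hBij⟩ := hscB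
    have hBM : ∀ i j, M i j = 0 → B i j = 0 := by
      intro i j h
      rw [hBij i j, h, Matrix.mul_zero, Matrix.zero_mul]
    have hrank : ((flattenBlocks B)ᴴ * flattenBlocks B).rank ≤ K := by
      rw [Matrix.rank_conjTranspose_mul_self]
      exact flatten_scaling M B R C hBij
    exact scaling_bound hm hn hr hc (by omega) M B hrowq hcolt hBM δ (le_of_lt hδ0) hδ1
      hds K hrank
  -- pass to the limit δ → 0 along 1/(k+1)
  set x : ℕ → ℝ := fun k => 1/((k:ℝ)+1) with hxdef
  have hx : Filter.Tendsto x Filter.atTop (nhds 0) := tendsto_one_div_add_atTop_nhds_zero_nat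
  have hxpos : ∀ j : ℕ, 0 < x j := by
    intro j; rw [hxdef]; positivity
  have hxle : ∀ j : ℕ, x j ≤ 1 := by
    intro j
    rw [hxdef]
    rw [div_le_one (by positivity)]
    simp [Nat.cast_nonneg]
  have h0 : ((m:ℝ)*r - m*(Real.sqrt r)*(0:ℝ))^2 ≤
      (K:ℝ) * ((n:ℝ)*(((m:ℝ)*r)/((n:ℝ)*c))^2*(Real.sqrt c+(0:ℝ))^2
        + (t:ℝ)*(m:ℝ)*((Real.sqrt r+(0:ℝ))^2 - ((r:ℝ)-(Real.sqrt r)*(0:ℝ))^2/((q:ℝ)*r))) := by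
    have hcL : Continuous (fun δ : ℝ => ((m:ℝ)*r - m*(Real.sqrt r)*δ)^2) := by fun_prop
    have hcD : Continuous (fun δ : ℝ => (K:ℝ) *
        ((n:ℝ)*(((m:ℝ)*r)/((n:ℝ)*c))^2*(Real.sqrt c+δ)^2
        + (t:ℝ)*(m:ℝ)*((Real.sqrt r+δ)^2 - ((r:ℝ)-(Real.sqrt r)*δ)^2/((q:ℝ)*r)))) := by
      apply Continuous.mul continuous_const
      apply Continuous.add
      · fun_prop
      · apply Continuous.mul continuous_const
        apply Continuous.sub
        · fun_prop
        · exact (Continuous.div_const (by fun_prop) _)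
    exact le_of_tendsto_of_tendsto' ((hcL.tendsto 0).comp hx) ((hcD.tendsto 0).comp hx)
      (fun j => hseq (x j) (hxpos j) (hxle j))
  simp only [mul_zero, add_zero, sub_zero] at h0
  rw [Real.sq_sqrt (by positivity : (0:ℝ) ≤ (c:ℝ)),
    Real.sq_sqrt (by positivity : (0:ℝ) ≤ (r:ℝ))] at h0
  -- final algebra
  have hm' : (0:ℝ) < m := by exact_mod_cast hm
  have hn' : (0:ℝ) < n := by exact_mod_cast hn
  have hr' : (0:ℝ) < r := by exact_mod_cast hr
  have hc' : (0:ℝ) < c := by exact_mod_cast hc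
  have hq' : (2:ℝ) ≤ q := by exact_mod_cast hq
  have ht' : (1:ℝ) ≤ t := by exact_mod_cast ht
  have hQ1 : (0:ℝ) < (q:ℝ) - 1 := by linarith
  have hQ0 : (0:ℝ) < (q:ℝ) := by linarith
  set a : ℝ := (m:ℝ)*r with hadef
  set b : ℝ := (n:ℝ)*c with hbdef
  set E : ℝ := (c:ℝ)*n*t*((q:ℝ)-1) with hEdef
  have hapos : 0 < a := by rw [hadef]; positivity
  have hbpos : 0 < b := by rw [hbdef]; positivity
  have hEpos : 0 < E := by rw [hEdef]; positivity
  have hden : 0 < a*(q:ℝ) + E := by positivity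
  have hKnn : (0:ℝ) ≤ (K:ℝ) := Nat.cast_nonneg K
  -- rewrite h0 to cleared form
  have h2 : a*b*(q:ℝ) ≤ (K:ℝ)*(a*(q:ℝ)+E) := by
    have hcalc : (n:ℝ)*(((m:ℝ)*r)/((n:ℝ)*c))^2*(c:ℝ)
        + (t:ℝ)*(m:ℝ)*((r:ℝ) - ((r:ℝ))^2/((q:ℝ)*r)) = a*(a*(q:ℝ)+E)/(b*(q:ℝ)) := by
      rw [hadef, hbdef, hEdef]
      field_simp
    rw [hcalc] at h0
    have h3 : a^2 * (b*(q:ℝ)) ≤ (K:ℝ) * (a*(a*(q:ℝ)+E)) := by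
      calc a^2 * (b*(q:ℝ)) ≤ ((K:ℝ) * (a*(a*(q:ℝ)+E)/(b*(q:ℝ)))) * (b*(q:ℝ)) := by
            apply mul_le_mul_of_nonneg_right _ (by positivity)
            calc a^2 = ((m:ℝ)*r)^2 := by rw [hadef]
              _ ≤ _ := h0
        _ = (K:ℝ) * (a*(a*(q:ℝ)+E)) := by
            field_simp
    have h4 : a * (a*b*(q:ℝ)) ≤ a * ((K:ℝ)*(a*(q:ℝ)+E)) := by nlinarith [h3]
    exact le_of_mul_le_mul_left h4 hapos
  have hgoal_eq : (n : ℝ) * c - (n : ℝ) * c /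
        (1 + (m : ℝ) * r * q / ((c : ℝ) * n * t * ((q : ℝ) - 1)))
      = a*b*(q:ℝ)/(a*(q:ℝ)+E) := by
    rw [hadef, hbdef, hEdef]
    have h1ne : (1:ℝ) + (m:ℝ)*r*q/((c:ℝ)*n*t*((q:ℝ)-1)) ≠ 0 := by positivity
    field_simp
    ring
  rw [hgoal_eq, div_le_iff₀ hden]
  linarith
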